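/- Let H be a lattice-ordered group (not assumed commutative), let G be an ℓ-subgroup of H (a subgroup that is also a sublattice), and let u ∈ G be a strong unit of H. If Γ(G,u) is a large pseudo MV-subalgebra of Γ(H,u) — that is, for every nonzero y in the interval [0,u] of H there exist n ∈ ℕ and a nonzero x in the interval [0,u] of G with x ≤ n.y, where n.y denotes y ⊕ ⋯ ⊕ y (n summands) computed with y ⊕ z := (y + z) ∧ u in H — then G is a large ℓ-subgroup of H: for every h ∈ H with 0 < h there exist n ∈ ℕ and x ∈ G with 0 < x and x ≤ n·h. -/

import Mathlib

variable {G : Type*} [Lattice G] [AddGroup G]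
  [CovariantClass G G (· + ·) (· ≤ ·)]
  [CovariantClass G G (Function.swap (· + ·)) (· ≤ ·)]

/-- `u` is a strong unit of the lattice-ordered group `G`. -/
def IsStrongUnit (u : G) : Prop := 0 ≤ u ∧ ∀ x : G, ∃ n : ℕ, x ≤ n • u

/-- The operation `x ⊕ y := (x + y) ⊓ u` of the pseudo MV-algebra `Γ(G,u)`. -/
def oplus (u x y : G) : G := (x + y) ⊓ u

/-- The operation `x ⊙ y := (x - u + y) ⊔ 0` of the pseudo MV-algebra `Γ(G,u)`. -/
def odot (u x y : G) : G := (x - u + y) ⊔ 0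

/-- `n.x := x ⊕ ⋯ ⊕ x` (`n` summands), with `0.x = 0`. -/
def nOplus (u : G) : ℕ → G → G
  | 0, _ => 0
  | n + 1, x => oplus u (nOplus u n x) x

/-- `I` is an ideal of the pseudo MV-algebra with carrier `C ⊆ Γ(G,u)`:
a nonempty subset of `C`, downward closed within `C`, and closed under `⊕`. -/
def IsIdealIn (u : G) (C I : Set G) : Prop :=
  I ⊆ C ∧ I.Nonempty ∧ (∀ x ∈ I, ∀ y ∈ C, y ≤ x → y ∈ I) ∧
    ∀ x ∈ I, ∀ y ∈ I, oplus u x y ∈ I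

/-- `I` is a normal ideal: `x ⊕ I = I ⊕ x` for all `x ∈ C`. -/
def IsNormalIdealIn (u : G) (C I : Set G) : Prop :=
  IsIdealIn u C I ∧ ∀ x ∈ C, (fun i => oplus u x i) '' I = (fun i => oplus u i x) '' I

/-- `⟨X⟩_n`, the smallest normal ideal (of the carrier `C`) containing `X`. -/
def normalGenIn (u : G) (C X : Set G) : Set G :=
  ⋂₀ {I | IsNormalIdealIn u C I ∧ X ⊆ I}

/-- The polar `X^⊥ = {y ∈ C : y ∧ x = 0 for all x ∈ X}` computed in carrier `C`. -/
def polarIn (C X : Set G) : Set G := {y ∈ C | ∀ x ∈ X, y ⊓ x = 0}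

/-- `A ⊕ B := {a ⊕ b : a ∈ A, b ∈ B}`. -/
def setOplus (u : G) (A B : Set G) : Set G := Set.image2 (oplus u) A B

/-- `↓a` computed within the carrier `C`. -/
def dsetIn (C : Set G) (a : G) : Set G := {x ∈ C | x ≤ a}

/-- `I` is a summand-ideal of the carrier `C`: a normal ideal such that for
some normal ideal `J`, `I ∩ J = {0}` and `⟨I ∪ J⟩_n = C`. -/
def IsSummandIdealIn (u : G) (C I : Set G) : Prop :=
  IsNormalIdealIn u C I ∧ ∃ J, IsNormalIdealIn u C J ∧ I ∩ J = {0} ∧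
    normalGenIn u C (I ∪ J) = C

/-- `I` is a polar ideal of the carrier `C`: `I = I^⊥⊥`. -/
def IsPolarIdealIn (C I : Set G) : Prop := polarIn C (polarIn C I) = I

/-- `a` is a Boolean element of the carrier `C`: `a ∈ C` and `a ⊕ a = a`. -/
def IsBooleanIn (u : G) (C : Set G) (a : G) : Prop := a ∈ C ∧ oplus u a a = a

/-- The carrier `C` is strongly projectable: every polar ideal is a summand-ideal. -/
def IsStronglyProjectableIn (u : G) (C : Set G) : Prop :=
  ∀ I : Set G, IsPolarIdealIn C I → IsSummandIdealIn u C I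

/-- `N` is a subalgebra of `Γ(G,u)`: contains `0` and `u`, closed under `⊕`,
`x⁻ = u - x` and `x∼ = -x + u`. -/
def IsSubalg (u : G) (N : Set G) : Prop :=
  N ⊆ Set.Icc 0 u ∧ 0 ∈ N ∧ u ∈ N ∧
    (∀ x ∈ N, ∀ y ∈ N, oplus u x y ∈ N) ∧
    (∀ x ∈ N, u - x ∈ N) ∧ (∀ x ∈ N, -x + u ∈ N)

/-- `N` is a large subalgebra of `Γ(G,u)`: for every nonzero `y ∈ Γ(G,u)` there
are `n ∈ ℕ` and a nonzero `x ∈ N` with `x ≤ n.y`. -/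
def IsLargeSubalg (u : G) (N : Set G) : Prop :=
  IsSubalg u N ∧ ∀ y ∈ Set.Icc (0 : G) u, y ≠ 0 →
    ∃ n : ℕ, ∃ x ∈ N, x ≠ 0 ∧ x ≤ nOplus u n y


private lemma inf_add_right' {H : Type*} [Lattice H] [AddGroup H]
    [CovariantClass H H (· + ·) (· ≤ ·)]
    [CovariantClass H H (Function.swap (· + ·)) (· ≤ ·)]
    (a b c : H) : (a ⊓ b) + c = (a + c) ⊓ (b + c) := by
  apply le_antisymm
  · exact le_inf (add_le_add_left inf_le_left c) (add_le_add_left inf_le_right c)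
  · have : (a + c) ⊓ (b + c) + -c ≤ a ⊓ b := by
      refine le_inf ?_ ?_
      · have := add_le_add_right (inf_le_left (a := a + c) (b := b + c)) (-c)
        simpa using this
      · have := add_le_add_right (inf_le_right (a := a + c) (b := b + c)) (-c)
        simpa using this
    have := add_le_add_left this c
    simpa using this

private lemma disjoint_nsmul' {H : Type*} [Lattice H] [AddGroup H]
    [CovariantClass H H (· + ·) (· ≤ ·)]
    [CovariantClass H H (Function.swap (· + ·)) (· ≤ ·)]
    {a u : H} (ha : 0 ≤ a) (hu : 0 ≤ u) (hd : a ⊓ u = 0) (n : ℕ) :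
    a ⊓ (n • u) = 0 := by
  induction n with
  | zero => simpa using le_antisymm (inf_le_right) (le_inf ha le_rfl)
  | succ n ih =>
    have hnu : (0:H) ≤ n • u := nsmul_nonneg hu n
    apply le_antisymm
    · have h1 : a ⊓ ((n+1) • u) ≤ (a + u) ⊓ (n • u + u) := by
        refine le_inf (le_trans inf_le_left (le_add_of_nonneg_right hu)) ?_
        rw [succ_nsmul] at *
        exact inf_le_right
      rw [← inf_add_right'] at h1
      rw [ih] at h1
      have h1' : a ⊓ ((n+1) • u) ≤ u := by simpa using h1
      have h2 : a ⊓ ((n+1) • u) ≤ a := inf_le_left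
      have := le_inf h2 h1'
      rw [hd] at this; exact this
    · exact le_inf ha (nsmul_nonneg hu (n+1))

private lemma nOplus_le_nsmul {H : Type*} [Lattice H] [AddGroup H]
    [CovariantClass H H (· + ·) (· ≤ ·)]
    [CovariantClass H H (Function.swap (· + ·)) (· ≤ ·)]
    (u y : H) (n : ℕ) : nOplus u n y ≤ n • y := by
  induction n with
  | zero => simp [nOplus]
  | succ n ih =>
    calc nOplus u (n+1) y = (nOplus u n y + y) ⊓ u := rfl
      _ ≤ nOplus u n y + y := inf_le_left
      _ ≤ n • y + y := add_le_add_left ih y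
      _ = (n+1) • y := (succ_nsmul y n).symm

theorem stmt19 {H : Type*} [Lattice H] [AddGroup H]
    [CovariantClass H H (· + ·) (· ≤ ·)]
    [CovariantClass H H (Function.swap (· + ·)) (· ≤ ·)]
    (G' : AddSubgroup H)
    (hlat : ∀ x ∈ G', ∀ y ∈ G', x ⊓ y ∈ G' ∧ x ⊔ y ∈ G')
    (u : H) (huG : u ∈ G') (hu : IsStrongUnit u)
    (hlarge : ∀ y ∈ Set.Icc (0 : H) u, y ≠ 0 →
      ∃ n : ℕ, ∃ x ∈ (G' : Set H) ∩ Set.Icc (0 : H) u, x ≠ 0 ∧ x ≤ nOplus u n y) :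
    ∀ h : H, 0 < h → ∃ n : ℕ, ∃ x ∈ G', 0 < x ∧ x ≤ n • h := by
  intro h hh
  obtain ⟨hu0, hstrong⟩ := hu
  set y := h ⊓ u with hy
  have hy0 : 0 ≤ y := le_inf hh.le hu0
  have hyu : y ≤ u := inf_le_right
  have hyh : y ≤ h := inf_le_left
  have hyne : y ≠ 0 := by
    intro h0
    obtain ⟨m, hm⟩ := hstrong h
    have := disjoint_nsmul' hh.le hu0 h0 m
    have : h ≤ 0 := by
      have h2 : h ⊓ (m • u) = h := inf_eq_left.mpr hm
      rw [this] at h2; exact h2.ge.trans le_rfl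
    exact absurd (lt_of_lt_of_le hh this) (lt_irrefl 0)
  obtain ⟨n, x, ⟨hxG, hx0, hxu⟩, hxne, hxle⟩ := hlarge y ⟨hy0, hyu⟩ hyne
  refine ⟨n, x, hxG, lt_of_le_of_ne hx0 (Ne.symm hxne), ?_⟩
  calc x ≤ nOplus u n y := hxle
    _ ≤ n • y := nOplus_le_nsmul u y n
    _ ≤ n • h := nsmul_le_nsmul_right hyh n
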